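/- For n = 2d, the maximum of |I(F,G)| over all cross-Sperner pairs (F,G) of families of subsets of [n] equals 2^n - 2^{d+1} + 1, where I(F,G) = {A ∩ B : A ∈ F, B ∈ G}. -/
import Mathlib


open Finset

def CrossSperner {α : Type*} [DecidableEq α] (F G : Finset (Finset α)) : Prop :=
  ∀ A ∈ F, ∀ B ∈ G, ¬ A ⊆ B ∧ ¬ B ⊆ A

def interFam {α : Type*} [DecidableEq α] (F G : Finset (Finset α)) : Finset (Finset α) :=
  (F ×ˢ G).image fun p => p.1 ∩ p.2

noncomputable def mSperner (n : ℕ) : ℕ :=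
  sSup {k | ∃ F G : Finset (Finset (Fin n)), CrossSperner F G ∧ k = (interFam F G).card}

/-! ### Auxiliary lemmas -/

lemma amgm_nat (a b f : ℕ) (h : a + b ≤ 2 * f) : a * b ≤ f * f := by
  have h' : (a : ℤ) + b ≤ 2 * f := by exact_mod_cast h
  have hg : (a : ℤ) * b ≤ (f : ℤ) * f := by nlinarith [sq_nonneg ((a : ℤ) - b), sq_nonneg ((a:ℤ) + b)]
  exact_mod_cast hg

/-- The three families `interFam F G`, `F`, `G` are pairwise disjoint. -/
lemma interFam_disjoint_left {α : Type*} [DecidableEq α] {F G : Finset (Finset α)}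
    (h : CrossSperner F G) : Disjoint (interFam F G) F := by
  rw [Finset.disjoint_left]
  rintro C hC hCF
  obtain ⟨⟨A, B⟩, hp, hC'⟩ := Finset.mem_image.1 hC
  rw [Finset.mem_product] at hp
  have hsub : C ⊆ B := by
    rw [← hC']; exact Finset.inter_subset_right
  exact (h C hCF B hp.2).1 hsub

lemma interFam_disjoint_right {α : Type*} [DecidableEq α] {F G : Finset (Finset α)}
    (h : CrossSperner F G) : Disjoint (interFam F G) G := by
  rw [Finset.disjoint_left]
  rintro C hC hCG
  obtain ⟨⟨A, B⟩, hp, hC'⟩ := Finset.mem_image.1 hC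
  rw [Finset.mem_product] at hp
  have hsub : C ⊆ A := by
    rw [← hC']; exact Finset.inter_subset_left
  exact (h A hp.1 C hCG).2 hsub

lemma cross_disjoint {α : Type*} [DecidableEq α] {F G : Finset (Finset α)}
    (h : CrossSperner F G) : Disjoint F G := by
  rw [Finset.disjoint_left]
  intro A hF hG
  exact (h A hF A hG).1 (subset_refl A)

/-- Upper bound: in `Fin (2*d)`, any cross-Sperner pair has at most `2^(2d) - 2^(d+1) + 1`
distinct intersections. -/
lemma interFam_card_le (d : ℕ) (hd : 1 ≤ d) (F G : Finset (Finset (Fin (2 * d))))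
    (h : CrossSperner F G) :
    (interFam F G).card + 2 ^ (d + 1) ≤ 2 ^ (2 * d) + 1 := by
  set e : ℕ := 2 ^ d with he
  have he1 : 1 ≤ e := Nat.one_le_two_pow
  obtain ⟨f, hf⟩ : ∃ f, e = f + 1 := ⟨e - 1, by omega⟩
  have hpow1 : 2 ^ (d + 1) = 2 * e := by rw [he, pow_succ]; ring
  have hpow2 : 2 ^ (2 * d) = e * e := by
    rw [he, ← pow_add]; congr 1; ring
  -- total count bound
  have htotal : (interFam F G).card + F.card + G.card ≤ 2 ^ (2 * d) := by
    have hdisj1 : Disjoint (interFam F G) F := interFam_disjoint_left h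
    have hdisj2 : Disjoint (interFam F G ∪ F) G := by
      rw [Finset.disjoint_union_left]
      exact ⟨interFam_disjoint_right h, cross_disjoint h⟩
    have hcard : (interFam F G ∪ F ∪ G).card
        = (interFam F G).card + F.card + G.card := by
      rw [Finset.card_union_of_disjoint hdisj2, Finset.card_union_of_disjoint hdisj1]
    calc (interFam F G).card + F.card + G.card
        = (interFam F G ∪ F ∪ G).card := hcard.symm
      _ ≤ (Finset.univ : Finset (Finset (Fin (2 * d)))).card :=
          Finset.card_le_card (Finset.subset_univ _)
      _ = 2 ^ (2 * d) := by
          rw [Finset.card_univ, Fintype.card_finset, Fintype.card_fin]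
  -- product bound
  have hprod : (interFam F G).card ≤ F.card * G.card := by
    calc (interFam F G).card ≤ (F ×ˢ G).card := Finset.card_image_le
      _ = F.card * G.card := Finset.card_product F G
  by_cases hcase : 2 ^ (d + 1) - 1 ≤ F.card + G.card
  · -- many members: use disjointness
    rw [hpow2]
    rw [hpow1] at hcase ⊢
    omega
  · -- few members: use AM-GM
    push_neg at hcase
    rw [hpow1] at hcase
    have hsum : F.card + G.card ≤ 2 * f := by omega
    have hab : F.card * G.card ≤ f * f := amgm_nat _ _ _ hsum
    have hee : e * e = f * f + 2 * f + 1 := by rw [hf]; ring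
    rw [hpow1, hpow2, hee]
    omega

/-! ### The construction attaining the bound -/

section Construction

variable (d : ℕ)

/-- The first `d` elements of `Fin (2*d)`. -/
def Shalf : Finset (Fin (2 * d)) :=
  (Finset.univ : Finset (Fin d)).map ⟨Fin.castLE (by omega), Fin.castLE_injective _⟩

lemma mem_Shalf (i : Fin (2 * d)) : i ∈ Shalf d ↔ (i : ℕ) < d := by
  simp only [Shalf, Finset.mem_map, Finset.mem_univ, true_and, Function.Embedding.coeFn_mk]
  constructor
  · rintro ⟨j, rfl⟩; exact j.2
  · intro hi; exact ⟨⟨i, hi⟩, by ext; rfl⟩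

lemma Shalf_card : (Shalf d).card = d := by
  rw [Shalf, Finset.card_map, Finset.card_univ, Fintype.card_fin]

lemma Thalf_card (hd : 1 ≤ d) : (Shalf d)ᶜ.card = d := by
  rw [Finset.card_compl, Shalf_card, Fintype.card_fin]; omega

def Fcon : Finset (Finset (Fin (2 * d))) :=
  ((Shalf d).powerset.erase (Shalf d)).image fun X => X ∪ (Shalf d)ᶜ

def Gcon : Finset (Finset (Fin (2 * d))) :=
  (((Shalf d)ᶜ).powerset.erase ((Shalf d)ᶜ)).image fun Y => Y ∪ (Shalf d)

lemma cross_con : CrossSperner (Fcon d) (Gcon d) := by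
  intro A hA B hB
  obtain ⟨X, hX, rfl⟩ := Finset.mem_image.1 hA
  obtain ⟨Y, hY, rfl⟩ := Finset.mem_image.1 hB
  rw [Finset.mem_erase, Finset.mem_powerset] at hX hY
  constructor
  · -- ¬ X ∪ Sᶜ ⊆ Y ∪ S
    intro hsub
    -- pick t ∈ Sᶜ \ Y
    have hne : ¬ (Shalf d)ᶜ ⊆ Y := by
      intro hc
      exact hY.1 (Finset.Subset.antisymm hY.2 hc)
    obtain ⟨t, htc, htY⟩ := Finset.not_subset.1 hne
    have ht' : t ∈ Y ∪ Shalf d := hsub (Finset.mem_union_right _ htc)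
    rcases Finset.mem_union.1 ht' with h1 | h1
    · exact htY h1
    · exact (Finset.mem_compl.1 htc) h1
  · intro hsub
    have hne : ¬ (Shalf d) ⊆ X := by
      intro hc
      exact hX.1 (Finset.Subset.antisymm hX.2 hc)
    obtain ⟨s, hsc, hsX⟩ := Finset.not_subset.1 hne
    have hs' : s ∈ X ∪ (Shalf d)ᶜ := hsub (Finset.mem_union_right _ hsc)
    rcases Finset.mem_union.1 hs' with h1 | h1
    · exact hsX h1
    · exact (Finset.mem_compl.1 h1) hsc

lemma inter_con_eq (X Y : Finset (Fin (2 * d))) (hX : X ⊆ Shalf d) (hY : Y ⊆ (Shalf d)ᶜ) :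
    (X ∪ (Shalf d)ᶜ) ∩ (Y ∪ Shalf d) = X ∪ Y := by
  ext i
  simp only [Finset.mem_inter, Finset.mem_union, Finset.mem_compl]
  constructor
  · rintro ⟨h1 | h1, h2 | h2⟩
    · exact Or.inl h1
    · exact Or.inl h1
    · exact Or.inr h2
    · exact absurd h2 h1
  · rintro (h | h)
    · exact ⟨Or.inl h, Or.inr (hX h)⟩
    · exact ⟨Or.inr (Finset.mem_compl.1 (hY h)), Or.inl h⟩

lemma interFam_con_eq :
    interFam (Fcon d) (Gcon d) =
      (((Shalf d).powerset.erase (Shalf d)) ×ˢ (((Shalf d)ᶜ).powerset.erase ((Shalf d)ᶜ))).image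
        fun p => p.1 ∪ p.2 := by
  ext C
  simp only [interFam, Finset.mem_image, Finset.mem_product]
  constructor
  · rintro ⟨⟨A, B⟩, ⟨hA, hB⟩, rfl⟩
    obtain ⟨X, hX, rfl⟩ := Finset.mem_image.1 hA
    obtain ⟨Y, hY, rfl⟩ := Finset.mem_image.1 hB
    refine ⟨⟨X, Y⟩, ⟨hX, hY⟩, ?_⟩
    rw [Finset.mem_erase, Finset.mem_powerset] at hX hY
    exact (inter_con_eq d X Y hX.2 hY.2).symm
  · rintro ⟨⟨X, Y⟩, ⟨hX, hY⟩, rfl⟩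
    refine ⟨⟨X ∪ (Shalf d)ᶜ, Y ∪ Shalf d⟩, ⟨?_, ?_⟩, ?_⟩
    · exact Finset.mem_image_of_mem _ hX
    · exact Finset.mem_image_of_mem _ hY
    · rw [Finset.mem_erase, Finset.mem_powerset] at hX hY
      exact (inter_con_eq d X Y hX.2 hY.2)

lemma interFam_con_card (hd : 1 ≤ d) :
    (interFam (Fcon d) (Gcon d)).card = (2 ^ d - 1) * (2 ^ d - 1) := by
  rw [interFam_con_eq]
  rw [Finset.card_image_of_injOn]
  · rw [Finset.card_product, Finset.card_erase_of_mem (Finset.mem_powerset_self _),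
      Finset.card_erase_of_mem (Finset.mem_powerset_self _),
      Finset.card_powerset, Finset.card_powerset, Shalf_card, Thalf_card d hd]
  · -- injectivity on pairs
    rintro ⟨X, Y⟩ hXY ⟨X', Y'⟩ hXY' heq
    simp only [Finset.mem_coe, Finset.mem_product, Finset.mem_erase, Finset.mem_powerset] at hXY hXY'
    have hX := hXY.1.2; have hY := hXY.2.2
    have hX' := hXY'.1.2; have hY' := hXY'.2.2
    have heq' : X ∪ Y = X' ∪ Y' := heq
    have hXeq : X = X' := by
      have h1 : (X ∪ Y) ∩ Shalf d = X := by
        rw [Finset.union_inter_distrib_right]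
        rw [Finset.inter_eq_left.2 hX]
        have : Y ∩ Shalf d = ∅ := by
          rw [← Finset.disjoint_iff_inter_eq_empty]
          exact Disjoint.mono_left hY disjoint_compl_left
        rw [this, Finset.union_empty]
      have h2 : (X' ∪ Y') ∩ Shalf d = X' := by
        rw [Finset.union_inter_distrib_right]
        rw [Finset.inter_eq_left.2 hX']
        have : Y' ∩ Shalf d = ∅ := by
          rw [← Finset.disjoint_iff_inter_eq_empty]
          exact Disjoint.mono_left hY' disjoint_compl_left
        rw [this, Finset.union_empty]
      rw [← h1, ← h2, heq']
    have hYeq : Y = Y' := by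
      have h1 : (X ∪ Y) ∩ (Shalf d)ᶜ = Y := by
        rw [Finset.union_inter_distrib_right]
        rw [Finset.inter_eq_left.2 hY]
        have : X ∩ (Shalf d)ᶜ = ∅ := by
          rw [← Finset.disjoint_iff_inter_eq_empty]
          exact Disjoint.mono_left hX disjoint_compl_right
        rw [this, Finset.empty_union]
      have h2 : (X' ∪ Y') ∩ (Shalf d)ᶜ = Y' := by
        rw [Finset.union_inter_distrib_right]
        rw [Finset.inter_eq_left.2 hY']
        have : X' ∩ (Shalf d)ᶜ = ∅ := by
          rw [← Finset.disjoint_iff_inter_eq_empty]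
          exact Disjoint.mono_left hX' disjoint_compl_right
        rw [this, Finset.empty_union]
      rw [← h1, ← h2, heq']
    simp [hXeq, hYeq]

end Construction

theorem stmt0 (d : ℕ) (hd : 1 ≤ d) :
    mSperner (2 * d) = 2 ^ (2 * d) - 2 ^ (d + 1) + 1 := by
  have he1 : 2 ≤ 2 ^ d := Nat.one_lt_two_pow_iff.2 (by omega)
  have hpow1 : 2 ^ (d + 1) = 2 * 2 ^ d := by rw [pow_succ]; ring
  have hpow2 : 2 ^ (2 * d) = 2 ^ d * 2 ^ d := by rw [← pow_add]; congr 1; ring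
  have hval : (2 ^ d - 1) * (2 ^ d - 1) = 2 ^ (2 * d) - 2 ^ (d + 1) + 1 := by
    obtain ⟨f, hf⟩ : ∃ f, 2 ^ d = f + 1 := ⟨2 ^ d - 1, by omega⟩
    have hf1 : 1 ≤ f := by omega
    have hff : 1 * 1 ≤ f * f := Nat.mul_le_mul hf1 hf1
    have h2 : 2 ^ (2 * d) = f * f + 2 * f + 1 := by rw [hpow2, hf]; ring
    have h3 : 2 ^ (d + 1) = 2 * f + 2 := by rw [hpow1, hf]; ring
    rw [hf, h2, h3, Nat.add_sub_cancel]
    omega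
  apply IsGreatest.csSup_eq
  constructor
  · -- membership: the construction
    refine ⟨Fcon d, Gcon d, cross_con d, ?_⟩
    rw [interFam_con_card d hd, hval]
  · -- upper bound
    rintro k ⟨F, G, hFG, rfl⟩
    have := interFam_card_le d hd F G hFG
    have h2 : 2 ^ (d + 1) ≤ 2 ^ (2 * d) := Nat.pow_le_pow_right (by norm_num) (by omega)
    omega
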